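/- For every integer n ≥ 2, the second largest eigenvalue of the adjacency matrix of the burnt pancake graph P_2(n) satisfies λ_2(P_2(n)) > n − 1. -/

import Mathlib

open Polynomial

/-- An `m`-coloured permutation of `{1, …, n}`: a pair `(χ, ψ)` of a colour
function `χ : [n] → ℤ/mℤ` and a permutation `ψ` of `[n]` (positions and letters
are 0-indexed, so the letter `1` of the paper corresponds to `0 : Fin n`). -/
abbrev ColouredPerm (m n : ℕ) := (Fin n → ZMod m) × Equiv.Perm (Fin n)

/-- The map on positions underlying reversal of the prefix of length `k`
(for `1 ≤ k ≤ n`; it is the identity outside this range of `k`). -/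
def flipFun (n k : ℕ) : Fin n → Fin n := fun t =>
  if h : t.val < k ∧ k ≤ n then ⟨k - 1 - t.val, by omega⟩ else t

theorem flipFun_involutive (n k : ℕ) : Function.Involutive (flipFun n k) := by
  intro t
  unfold flipFun
  by_cases h : t.val < k ∧ k ≤ n
  · rw [dif_pos h, dif_pos (by simp only [Fin.val_mk]; omega)]
    apply Fin.ext
    simp only [Fin.val_mk]
    omega
  · rw [dif_neg h, dif_neg h]

/-- Reversal of the prefix of length `k`, as a permutation of positions. -/
def flipPerm (n k : ℕ) : Equiv.Perm (Fin n) := (flipFun_involutive n k).toPerm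

/-- The prefix reversal `r_k^ε` acting on `m`-coloured permutations: it
reverses the prefix of length `k` and adds `ε` to the colours in that prefix. -/
def prefixRev (m n : ℕ) (k : ℕ) (ε : ZMod m) (σ : ColouredPerm m n) :
    ColouredPerm m n :=
  (fun t => if t.val < k then σ.1 (flipPerm n k t) + ε else σ.1 t,
   σ.2 * flipPerm n k)

/-- Adjacency in the generalised pancake graph: two distinct coloured
permutations are adjacent iff one is obtained from the other by a prefix
reversal `r_k^ε` with `1 ≤ k ≤ n` and `ε ∈ {+1, -1}`. -/
def pancakeAdj (m n : ℕ) (σ τ : ColouredPerm m n) : Prop :=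
  σ ≠ τ ∧ ∃ k, 1 ≤ k ∧ k ≤ n ∧ ∃ ε : ZMod m, (ε = 1 ∨ ε = -1) ∧
    (τ = prefixRev m n k ε σ ∨ σ = prefixRev m n k ε τ)

/-- The generalised pancake graph `𝒫_m(n)`. -/
def pancakeGraph (m n : ℕ) : SimpleGraph (ColouredPerm m n) where
  Adj := pancakeAdj m n
  symm := by
    constructor
    rintro a b ⟨hab, k, hk1, hk2, ε, hε, h⟩
    exact ⟨hab.symm, k, hk1, hk2, ε, hε, h.symm⟩
  loopless := by constructor; rintro a ⟨h, -⟩; exact h rfl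

open Classical in
/-- The (real) adjacency matrix of the generalised pancake graph `𝒫_m(n)`. -/
noncomputable def pancakeAdjMatrix (m n : ℕ) :
    Matrix (ColouredPerm m n) (ColouredPerm m n) ℝ :=
  Matrix.of fun σ τ => if pancakeAdj m n σ τ then 1 else 0

/-- The `i`-th largest eigenvalue (`i = 1, 2, …`) of a real matrix `M`,
i.e. the `i`-th largest root of its characteristic polynomial, counted
with multiplicity (junk value `0` if there are fewer than `i` real roots). -/
noncomputable def nthLargestEig {V : Type*} [Fintype V] [DecidableEq V]
    (M : Matrix V V ℝ) (i : ℕ) : ℝ :=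
  ((M.charpoly.roots.sort (· ≤ ·)).reverse).getD (i - 1) 0

/-- The diagonal matrix `D_n = diag(0, 1, …, n-1)`. -/
noncomputable def Dmat (n : ℕ) : Matrix (Fin n) (Fin n) ℝ :=
  Matrix.diagonal fun j => (j.val : ℝ)

/-- The 0/1 matrix `E_n`, whose `(i, j)` entry (1-indexed) is `1` iff
`i + j ≤ n + 1`. -/
noncomputable def Emat (n : ℕ) : Matrix (Fin n) (Fin n) ℝ :=
  Matrix.of fun j j' => if (j.val + 1) + (j'.val + 1) ≤ n + 1 then 1 else 0

/-- The `mn × mn` block circulant matrix `circ(B_0, …, B_{m-1})` whose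
`(r, s)` block is `B_{s - r mod m}`. -/
def blockCirc (m n : ℕ) (B : ZMod m → Matrix (Fin n) (Fin n) ℝ) :
    Matrix (ZMod m × Fin n) (ZMod m × Fin n) ℝ :=
  Matrix.of fun p q => B (q.1 - p.1) p.2 q.2

/-- The part `V_{i,j}` of the vertex set of `𝒫_m(n)`: those coloured
permutations in which the letter `1` (here `0 : Fin n`) occupies position `j`
with colour `i`. -/
def Vpart (m n : ℕ) (i : ZMod m) (j : Fin n) : Set (ColouredPerm m n) :=
  {σ | σ.2 j = ⟨0, j.pos⟩ ∧ σ.1 j = i}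

section FlipLemmas

open Finset

lemma flipPerm_apply_lt {n k : ℕ} (hk : k ≤ n) {t : Fin n} (ht : t.val < k) :
    flipPerm n k t = ⟨k - 1 - t.val, by omega⟩ := by
  show flipFun n k t = _
  rw [flipFun, dif_pos ⟨ht, hk⟩]

lemma flipPerm_apply_ge {n k : ℕ} {t : Fin n} (ht : ¬ t.val < k) :
    flipPerm n k t = t := by
  show flipFun n k t = _
  rw [flipFun, dif_neg (by omega)]

lemma flipPerm_val_lt {n k : ℕ} (hk : k ≤ n) (hk1 : 1 ≤ k) {t : Fin n} (ht : t.val < k) :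
    (flipPerm n k t).val < k := by
  rw [flipPerm_apply_lt hk ht]; simp; omega

lemma flipPerm_flipPerm {n k : ℕ} (t : Fin n) :
    flipPerm n k (flipPerm n k t) = t := flipFun_involutive n k t

lemma flipPerm_symm {n k : ℕ} : (flipPerm n k).symm = flipPerm n k :=
  Equiv.Perm.inv_def (flipFun_involutive n k).toPerm ▸ rfl

lemma prefixRev_snd {m n k : ℕ} {ε : ZMod m} (σ : ColouredPerm m n) :
    (prefixRev m n k ε σ).2 = σ.2 * flipPerm n k := rfl

lemma prefixRev_fst {m n k : ℕ} {ε : ZMod m} (σ : ColouredPerm m n) (t : Fin n) :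
    (prefixRev m n k ε σ).1 t = if t.val < k then σ.1 (flipPerm n k t) + ε else σ.1 t := rfl

lemma prefixRev_invol {n k : ℕ} (hk : k ≤ n) (σ : ColouredPerm 2 n) :
    prefixRev 2 n k 1 (prefixRev 2 n k 1 σ) = σ := by
  refine Prod.ext ?_ ?_
  · funext t
    rw [prefixRev_fst]
    by_cases ht : t.val < k
    · rw [if_pos ht, prefixRev_fst,
        if_pos (flipPerm_val_lt hk (by omega) ht), flipPerm_flipPerm]
      have : (1 : ZMod 2) + 1 = 0 := by decide
      rw [add_assoc, this, add_zero]
    · rw [if_neg ht, prefixRev_fst, if_neg ht]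
  · show (σ.2 * flipPerm n k) * flipPerm n k = σ.2
    rw [mul_assoc]
    convert mul_one σ.2
    ext t
    simpa using congrArg Fin.val (flipPerm_flipPerm (n := n) (k := k) t)

lemma flipPerm_zero {n k : ℕ} (hn : 0 < n) (hk1 : 1 ≤ k) (hk : k ≤ n) :
    flipPerm n k ⟨0, hn⟩ = ⟨k - 1, by omega⟩ := by
  rw [flipPerm_apply_lt hk (show (⟨0, hn⟩ : Fin n).val < k by simpa using (show 0 < k by omega))]
  simp

lemma prefixRev_ne {n k : ℕ} (hn : 0 < n) (hk1 : 1 ≤ k) (hk : k ≤ n) (σ : ColouredPerm 2 n) :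
    prefixRev 2 n k 1 σ ≠ σ := by
  intro h
  have h2 : σ.2 * flipPerm n k = σ.2 := congrArg Prod.snd h
  have hflip : flipPerm n k = 1 := by
    have := mul_left_cancel (a := σ.2) (b := flipPerm n k) (c := 1) (by rw [mul_one]; exact h2)
    exact this
  have h1 : (prefixRev 2 n k 1 σ).1 ⟨0, hn⟩ = σ.1 ⟨0, hn⟩ := congrFun (congrArg Prod.fst h) _
  rw [prefixRev_fst, if_pos (by simpa using (show 0 < k by omega)), hflip] at h1
  simp at h1

lemma prefixRev_inj {n : ℕ} (hn : 0 < n) {k k' : ℕ} (hk1 : 1 ≤ k) (hk : k ≤ n)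
    (hk1' : 1 ≤ k') (hk' : k' ≤ n) (σ : ColouredPerm 2 n)
    (h : prefixRev 2 n k 1 σ = prefixRev 2 n k' 1 σ) : k = k' := by
  have h2 : σ.2 * flipPerm n k = σ.2 * flipPerm n k' := congrArg Prod.snd h
  have hflip : flipPerm n k = flipPerm n k' := mul_left_cancel h2
  have := congrArg (fun e => (e ⟨0, hn⟩).val) hflip
  simp only [flipPerm_zero hn hk1 hk, flipPerm_zero hn hk1' hk'] at this
  omega

end FlipLemmas

section Neighbors
open Matrix

open Finset Classical in
lemma neighborFinset_eq {n : ℕ} (hn : 0 < n) (σ : ColouredPerm 2 n) :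
    Finset.univ.filter (fun τ => pancakeAdj 2 n σ τ)
      = (Finset.Icc 1 n).image (fun k => prefixRev 2 n k 1 σ) := by
  ext τ
  simp only [Finset.mem_filter, Finset.mem_univ, true_and, Finset.mem_image, Finset.mem_Icc]
  constructor
  · rintro ⟨hne, k, hk1, hk, ε, hε, h⟩
    have hε1 : ε = 1 := by rcases hε with h | h <;> [exact h; (rw [h]; decide)]
    subst hε1
    refine ⟨k, ⟨hk1, hk⟩, ?_⟩
    rcases h with h | h
    · exact h.symm
    · rw [h, prefixRev_invol hk]
  · rintro ⟨k, ⟨hk1, hk⟩, rfl⟩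
    exact ⟨(prefixRev_ne hn hk1 hk σ).symm, k, hk1, hk, 1, Or.inl rfl, Or.inl rfl⟩

open Finset in
lemma mulVec_pancake {n : ℕ} (hn : 0 < n) (f : ColouredPerm 2 n → ℝ) (σ : ColouredPerm 2 n) :
    (pancakeAdjMatrix 2 n *ᵥ f) σ = ∑ k ∈ Finset.Icc 1 n, f (prefixRev 2 n k 1 σ) := by
  classical
  have h1 : (pancakeAdjMatrix 2 n *ᵥ f) σ
      = ∑ τ ∈ Finset.univ.filter (fun τ => pancakeAdj 2 n σ τ), f τ := by
    rw [Finset.sum_filter, Matrix.mulVec, dotProduct]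
    refine Finset.sum_congr rfl fun τ _ => ?_
    by_cases h : pancakeAdj 2 n σ τ
    · simp [pancakeAdjMatrix, h]
    · simp [pancakeAdjMatrix, h]
  rw [h1, neighborFinset_eq hn σ, Finset.sum_image]
  intro k hk k' hk' h
  simp only [Finset.mem_coe, Finset.mem_Icc] at hk hk'
  exact prefixRev_inj hn hk.1 hk.2 hk'.1 hk'.2 σ h

end Neighbors

section Quotient
open Matrix Finset

lemma rowDE {n : ℕ} (u : Fin n → ℝ) (j : Fin n) :
    ((Dmat n - Emat n) *ᵥ u) j
      = (j.val : ℝ) * u j - ∑ j' ∈ Finset.univ.filter (fun j' : Fin n => j.val + j'.val + 1 ≤ n), u j' := by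
  classical
  rw [Matrix.sub_mulVec, Pi.sub_apply]
  congr 1
  · rw [Dmat, Matrix.mulVec_diagonal]
  · rw [Matrix.mulVec, dotProduct, Finset.sum_filter]
    refine Finset.sum_congr rfl fun j' _ => ?_
    by_cases h : j.val + j'.val + 1 ≤ n
    · rw [if_pos h]
      simp [Emat, show j.val + 1 + (j'.val + 1) ≤ n + 1 by omega]
    · rw [if_neg h]
      simp [Emat, show ¬ (j.val + 1 + (j'.val + 1) ≤ n + 1) by omega]

lemma card_rowfilter {n : ℕ} (j : Fin n) :
    (Finset.univ.filter (fun j' : Fin n => j.val + j'.val + 1 ≤ n)).card = n - j.val := by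
  classical
  have hj := j.isLt
  have heq : Finset.univ.filter (fun j' : Fin n => j.val + j'.val + 1 ≤ n)
      = (Finset.range (n - j.val)).attachFin
        (fun m hm => by rw [Finset.mem_range] at hm; omega) := by
    ext a
    simp only [Finset.mem_filter, Finset.mem_univ, true_and, Finset.mem_attachFin,
      Finset.mem_range]
    omega
  rw [heq, Finset.card_attachFin, Finset.card_range]

/-- Any eigenvalue of `D - E` is `< n`. -/
lemma eig_DE_lt {n : ℕ} (hn : 2 ≤ n) {μ : ℝ} {u : Fin n → ℝ} (hu : u ≠ 0)
    (heig : (Dmat n - Emat n) *ᵥ u = μ • u) : μ < n := by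
  classical
  by_contra hge
  push_neg at hge
  -- maximizer of |u|
  obtain ⟨j, -, hjmax⟩ := Finset.exists_max_image (Finset.univ : Finset (Fin n))
    (fun j => |u j|) ⟨⟨0, by omega⟩, Finset.mem_univ _⟩
  set M0 := |u j| with hM0
  have hM0pos : 0 < M0 := by
    rcases lt_or_ge 0 M0 with h | h
    · exact h
    · exfalso; apply hu; funext t
      have := hjmax t (Finset.mem_univ t)
      have : |u t| ≤ 0 := le_trans this h
      have := abs_nonneg (u t)
      simp only [Pi.zero_apply]
      nlinarith [abs_nonneg (u t), abs_le.mp (show |u t| ≤ 0 by linarith)]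
  -- replace u by sign-normalised w
  obtain ⟨s, hs, hsj⟩ : ∃ s : ℝ, (s = 1 ∨ s = -1) ∧ s * u j = M0 := by
    rcases abs_cases (u j) with ⟨h1, -⟩ | ⟨h1, -⟩
    · exact ⟨1, Or.inl rfl, by rw [one_mul, hM0, h1]⟩
    · exact ⟨-1, Or.inr rfl, by rw [hM0, h1]; ring⟩
  set w : Fin n → ℝ := fun t => s * u t with hw
  have hweig : ∀ t : Fin n, ((Dmat n - Emat n) *ᵥ w) t = μ * w t := by
    intro t
    have h1 : (Dmat n - Emat n) *ᵥ w = s • ((Dmat n - Emat n) *ᵥ u) := by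
      rw [← Matrix.mulVec_smul]; rfl
    rw [h1, heig]
    simp only [Pi.smul_apply, smul_eq_mul, hw]
    ring
  have hwabs : ∀ t, |w t| = |u t| := by
    intro t
    rcases hs with rfl | rfl <;> simp [hw, abs_mul]
  have hwj : w j = M0 := hsj
  have hwle : ∀ t, -M0 ≤ w t ∧ w t ≤ M0 := by
    intro t
    have := hjmax t (Finset.mem_univ t)
    rw [← hwabs t] at this
    exact abs_le.mp (le_trans this (le_of_eq rfl))
  -- row j
  have hrowj := hweig j
  rw [rowDE] at hrowj
  set S := ∑ j' ∈ Finset.univ.filter (fun j' : Fin n => j.val + j'.val + 1 ≤ n), w j' with hS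
  -- S = (j - μ) * M0 ≤ -(n - j) M0
  have hSval : S = ((j.val : ℝ) - μ) * M0 := by
    rw [hwj] at hrowj; linarith [hrowj]
  have hcard := card_rowfilter j
  have hjval : (j.val : ℝ) + 1 ≤ (n : ℝ) := by exact_mod_cast j.isLt
  have hcardR : ((Finset.univ.filter (fun j' : Fin n => j.val + j'.val + 1 ≤ n)).card : ℝ)
      = (n : ℝ) - j.val := by
    rw [hcard]; push_cast [Nat.cast_sub (le_of_lt j.isLt)]; ring
  -- lower bound on S
  have hSlb : ((n : ℝ) - j.val) * (-M0) ≤ S := by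
    have := Finset.card_nsmul_le_sum
      (Finset.univ.filter (fun j' : Fin n => j.val + j'.val + 1 ≤ n)) w (-M0)
      (fun t _ => (hwle t).1)
    rwa [nsmul_eq_mul, hcardR] at this
  -- μ = n
  have hμ : μ = (n : ℝ) := by nlinarith [hSval, hSlb, hM0pos]
  -- all entries of the j-th row range are -M0
  have hall : ∀ j' ∈ Finset.univ.filter (fun j' : Fin n => j.val + j'.val + 1 ≤ n),
      w j' = -M0 := by
    by_contra hex
    push_neg at hex
    obtain ⟨j0, hj0mem, hj0⟩ := hex
    have hlt : (∑ _t ∈ Finset.univ.filter (fun j' : Fin n => j.val + j'.val + 1 ≤ n),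
        (-M0)) < S := by
      refine Finset.sum_lt_sum (fun t _ => (hwle t).1) ⟨j0, hj0mem, ?_⟩
      rcases lt_or_eq_of_le (hwle j0).1 with h | h
      · exact h
      · exact absurd h.symm hj0
    rw [Finset.sum_const, nsmul_eq_mul, hcardR] at hlt
    nlinarith [hSval, hM0pos, hlt]
  -- position 0
  have hz : (⟨0, by omega⟩ : Fin n) ∈
      Finset.univ.filter (fun j' : Fin n => j.val + j'.val + 1 ≤ n) := by
    simp only [Finset.mem_filter, Finset.mem_univ, true_and]
    have := j.isLt; omega
  set z : Fin n := ⟨0, by omega⟩ with hzdef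
  have hwz : w z = -M0 := hall z hz
  -- row z
  have hrowz := hweig z
  rw [rowDE] at hrowz
  have hfz : Finset.univ.filter (fun j' : Fin n => z.val + j'.val + 1 ≤ n)
      = Finset.univ := by
    ext a
    simp only [Finset.mem_filter, Finset.mem_univ, true_and, iff_true, hzdef]
    have := a.isLt; omega
  rw [hfz] at hrowz
  have hsumu : ∑ t : Fin n, w t = (n : ℝ) * M0 := by
    have : (z.val : ℝ) = 0 := by simp [hzdef]
    rw [this, zero_mul] at hrowz
    rw [hμ, hwz] at hrowz
    linarith [hrowz]
  have hsumlt : ∑ t : Fin n, w t < ∑ _t : Fin n, M0 := by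
    refine Finset.sum_lt_sum (fun t _ => (hwle t).2) ⟨z, Finset.mem_univ z, ?_⟩
    rw [hwz]; linarith
  rw [Finset.sum_const, Finset.card_univ, Fintype.card_fin, nsmul_eq_mul] at hsumlt
  rw [hsumu] at hsumlt
  exact absurd hsumlt (lt_irrefl _)

end Quotient

section DotHelpers
open Matrix Finset

lemma dot_sum_left {N : ℕ} {ι : Type*} (s : Finset ι) (f : ι → (Fin N → ℝ)) (g : Fin N → ℝ) :
    (∑ i ∈ s, f i) ⬝ᵥ g = ∑ i ∈ s, (f i ⬝ᵥ g) := by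
  simp only [dotProduct, Finset.sum_apply, Finset.sum_mul]
  rw [Finset.sum_comm]

lemma dot_sum_right {N : ℕ} {ι : Type*} (s : Finset ι) (g : Fin N → ℝ) (f : ι → (Fin N → ℝ)) :
    g ⬝ᵥ (∑ i ∈ s, f i) = ∑ i ∈ s, (g ⬝ᵥ f i) := by
  simp only [dotProduct, Finset.sum_apply, Finset.mul_sum]
  rw [Finset.sum_comm]

end DotHelpers

section Spectral
open Matrix Finset

lemma DE_isHermitian (n : ℕ) : (Dmat n - Emat n).IsHermitian := by
  rw [Matrix.IsHermitian]
  ext i j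
  simp only [Matrix.conjTranspose_apply, Matrix.sub_apply, star_trivial]
  congr 1
  · by_cases h : i = j
    · subst h; rfl
    · rw [Dmat, Matrix.diagonal_apply_ne _ (fun hh => h hh.symm),
        Matrix.diagonal_apply_ne _ h]
  · by_cases h : (j.val + 1) + (i.val + 1) ≤ n + 1
    · rw [Emat]
      simp only [Matrix.of_apply]
      rw [if_pos h, if_pos (by omega)]
    · rw [Emat]
      simp only [Matrix.of_apply]
      rw [if_neg h, if_neg (by omega)]

lemma exists_eig_DE_gt {n : ℕ} (hn : 2 ≤ n) :
    ∃ μ : ℝ, (n : ℝ) - 1 < μ ∧ μ < n ∧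
      ∃ u : Fin n → ℝ, u ≠ 0 ∧ (Dmat n - Emat n) *ᵥ u = μ • u := by
  classical
  set M := Dmat n - Emat n with hMdef
  have hM : M.IsHermitian := DE_isHermitian n
  set b := hM.eigenvectorBasis with hb
  -- the test vector
  set e0 : Fin n := ⟨0, by omega⟩ with he0
  set e1 : Fin n := ⟨n - 1, by omega⟩ with he1
  have he01 : e0 ≠ e1 := by
    intro h
    have := congrArg Fin.val h
    simp [he0, he1] at this
    omega
  set v : Fin n → ℝ := (-1 : ℝ) • (Pi.single e0 (1:ℝ) : Fin n → ℝ) + (n : ℝ) • (Pi.single e1 (1:ℝ) : Fin n → ℝ) with hv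
  -- matrix entries
  have hM00 : M e0 e0 = -1 := by
    simp only [hMdef, Matrix.sub_apply, Dmat, Emat, Matrix.diagonal_apply_eq, Matrix.of_apply]
    rw [if_pos (by simp [he0]; omega)]
    simp [he0]
  have hM01 : M e0 e1 = -1 := by
    simp only [hMdef, Matrix.sub_apply, Dmat, Emat, Matrix.of_apply,
      Matrix.diagonal_apply_ne _ he01]
    rw [if_pos (by simp [he0, he1]; omega)]
    norm_num
  have hM10 : M e1 e0 = -1 := by
    simp only [hMdef, Matrix.sub_apply, Dmat, Emat, Matrix.of_apply,
      Matrix.diagonal_apply_ne _ (Ne.symm he01)]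
    rw [if_pos (by simp [he0, he1]; omega)]
    norm_num
  have hM11 : M e1 e1 = (n : ℝ) - 1 := by
    simp only [hMdef, Matrix.sub_apply, Dmat, Emat, Matrix.diagonal_apply_eq, Matrix.of_apply]
    rw [if_neg (by simp [he1]; omega)]
    simp [he1]
    push_cast [Nat.cast_sub (show 1 ≤ n by omega)]
    ring
  -- quadratic forms of the test vector
  have hvMv : v ⬝ᵥ (M *ᵥ v) = (n:ℝ)^2 * ((n:ℝ) - 1) + 2 * n - 1 := by
    rw [hv]
    simp only [Matrix.mulVec_add, Matrix.mulVec_smul, add_dotProduct,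
      smul_dotProduct, dotProduct_add, dotProduct_smul,
      Matrix.mulVec_single, smul_eq_mul]
    simp only [single_dotProduct, one_mul, mul_one, Matrix.col_apply, MulOpposite.op_one, one_smul]
    rw [hM00, hM01, hM10, hM11]
    ring
  have hvv : v ⬝ᵥ v = (n:ℝ)^2 + 1 := by
    rw [hv]
    simp only [add_dotProduct, smul_dotProduct, dotProduct_add,
      dotProduct_smul, smul_eq_mul, single_dotProduct,
      dotProduct_single, one_mul, mul_one, Pi.add_apply, Pi.smul_apply,
      Pi.single_eq_same, Pi.single_eq_of_ne he01, Pi.single_eq_of_ne (Ne.symm he01)]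
    ring
  -- expansion in the eigenbasis
  set L := WithLp.linearEquiv 2 ℝ (Fin n → ℝ) with hL
  set v' : EuclideanSpace ℝ (Fin n) := L.symm v with hv'
  set c : Fin n → ℝ := fun i => (inner ℝ (b i) v' : ℝ) with hc
  have hrepr : ∑ i, c i • b i = v' := b.sum_repr' v'
  have hreprf : v = ∑ i, c i • L (b i) := by
    have h1 := congrArg L hrepr
    rw [map_sum] at h1
    simp only [_root_.map_smul] at h1
    exact (h1.trans (by rw [hv', LinearEquiv.apply_symm_apply])).symm
  -- dot products of eigenbasis vectors
  have hortho : ∀ i j : Fin n, L (b i) ⬝ᵥ L (b j) = if i = j then (1:ℝ) else 0 := by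
    intro i j
    have := orthonormal_iff_ite.mp b.orthonormal i j
    rw [PiLp.inner_apply] at this
    simpa [dotProduct, hL, mul_comm] using this
  have heigen : ∀ i : Fin n, M *ᵥ L (b i) = hM.eigenvalues i • L (b i) := by
    intro i
    exact hM.mulVec_eigenvectorBasis i
  -- quadratic form via eigenvalues
  have hQ : v ⬝ᵥ (M *ᵥ v) = ∑ i, hM.eigenvalues i * (c i)^2 := by
    conv_lhs => rw [hreprf]
    rw [show M *ᵥ (∑ i, c i • L (b i)) = ∑ i, (c i * hM.eigenvalues i) • L (b i) by
      rw [← Matrix.mulVecLin_apply, map_sum]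
      refine Finset.sum_congr rfl fun i _ => ?_
      rw [_root_.map_smul, Matrix.mulVecLin_apply, heigen i, smul_smul]]
    rw [dot_sum_left]
    refine (Finset.sum_congr rfl fun i _ => ?_)
    rw [smul_dotProduct, dot_sum_right]
    rw [Finset.sum_eq_single i (fun j _ hj => by
        rw [dotProduct_smul, hortho, if_neg (Ne.symm hj)]; simp)
      (fun h => absurd (Finset.mem_univ i) h)]
    rw [dotProduct_smul, hortho, if_pos rfl]
    simp; ring
  have hN : v ⬝ᵥ v = ∑ i, (c i)^2 := by
    conv_lhs => rw [hreprf]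
    rw [dot_sum_left]
    refine (Finset.sum_congr rfl fun i _ => ?_)
    rw [smul_dotProduct, dot_sum_right]
    rw [Finset.sum_eq_single i (fun j _ hj => by
        rw [dotProduct_smul, hortho, if_neg (Ne.symm hj)]; simp)
      (fun h => absurd (Finset.mem_univ i) h)]
    rw [dotProduct_smul, hortho, if_pos rfl]
    simp; ring
  -- there is an eigenvalue > n - 1
  have hex : ∃ i, (n:ℝ) - 1 < hM.eigenvalues i := by
    by_contra hno
    push_neg at hno
    have hle : ∑ i, hM.eigenvalues i * (c i)^2 ≤ ∑ i, ((n:ℝ)-1) * (c i)^2 :=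
      Finset.sum_le_sum fun i _ =>
        mul_le_mul_of_nonneg_right (hno i) (sq_nonneg _)
    rw [← hQ] at hle
    rw [← Finset.mul_sum, ← hN, hvv, hvMv] at hle
    have hnR : (2:ℝ) ≤ n := by exact_mod_cast hn
    nlinarith
  obtain ⟨i, hi⟩ := hex
  refine ⟨hM.eigenvalues i, hi, ?_, L (b i), ?_, heigen i⟩
  · exact eig_DE_lt hn (fun h => b.orthonormal.ne_zero i (by
      apply L.injective
      rw [h, map_zero]) ) (heigen i)
  · intro h
    exact b.orthonormal.ne_zero i (by apply L.injective; rw [h, map_zero])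

end Spectral

section Lift
open Matrix Finset

def sgn2 (c : ZMod 2) : ℝ := if c = 0 then 1 else -1

lemma zmod2_cases : ∀ c : ZMod 2, c = 0 ∨ c = 1 := by decide

lemma sgn2_add_one (c : ZMod 2) : sgn2 (c + 1) = - sgn2 c := by
  rcases zmod2_cases c with rfl | rfl
  · show sgn2 1 = - sgn2 0
    simp [sgn2]
  · show sgn2 (1 + 1) = - sgn2 1
    have : (1 + 1 : ZMod 2) = 0 := by decide
    rw [this]
    simp [sgn2]

lemma pos_prefixRev {n k : ℕ} (hn : 0 < n) (σ : ColouredPerm 2 n) :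
    (prefixRev 2 n k 1 σ).2.symm ⟨0, hn⟩ = flipPerm n k (σ.2.symm ⟨0, hn⟩) := by
  rw [prefixRev_snd, Equiv.Perm.mul_def, Equiv.symm_trans_apply, flipPerm_symm]

lemma ones_eig {n : ℕ} (hn : 0 < n) :
    pancakeAdjMatrix 2 n *ᵥ (fun _ : ColouredPerm 2 n => (1:ℝ))
      = (n : ℝ) • (fun _ : ColouredPerm 2 n => (1:ℝ)) := by
  funext σ
  rw [mulVec_pancake hn]
  simp [Nat.card_Icc]

lemma lift_eig {n : ℕ} (hn : 0 < n) (μ : ℝ) (u : Fin n → ℝ)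
    (heig : (Dmat n - Emat n) *ᵥ u = μ • u) :
    pancakeAdjMatrix 2 n *ᵥ (fun σ : ColouredPerm 2 n =>
      sgn2 (σ.1 (σ.2.symm ⟨0, hn⟩)) * u (σ.2.symm ⟨0, hn⟩))
    = μ • (fun σ : ColouredPerm 2 n =>
      sgn2 (σ.1 (σ.2.symm ⟨0, hn⟩)) * u (σ.2.symm ⟨0, hn⟩)) := by
  classical
  funext σ
  rw [mulVec_pancake hn]
  set j : Fin n := σ.2.symm ⟨0, hn⟩ with hj
  set s : ℝ := sgn2 (σ.1 j) with hs
  set g : ℕ → ℝ := fun k =>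
    if h : j.val < k ∧ k ≤ n then -s * u ⟨k - 1 - j.val, by omega⟩ else s * u j with hg
  have hstep : ∀ k ∈ Finset.Icc 1 n,
      (fun σ : ColouredPerm 2 n =>
        sgn2 (σ.1 (σ.2.symm ⟨0, hn⟩)) * u (σ.2.symm ⟨0, hn⟩)) (prefixRev 2 n k 1 σ)
      = g k := by
    intro k hk
    rw [Finset.mem_Icc] at hk
    obtain ⟨hk1, hkn⟩ := hk
    simp only
    rw [pos_prefixRev hn σ, ← hj]
    by_cases hjk : j.val < k
    · rw [flipPerm_apply_lt hkn hjk]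
      have hgk : g k = -s * u ⟨k - 1 - j.val, by omega⟩ := by
        simp only [hg]; rw [dif_pos ⟨hjk, hkn⟩]
      rw [hgk]
      have hlt : (⟨k - 1 - j.val, by omega⟩ : Fin n).val < k := by simp; omega
      rw [prefixRev_fst, if_pos hlt]
      rw [show flipPerm n k ⟨k - 1 - j.val, by omega⟩ = j from by
        rw [← flipPerm_apply_lt hkn hjk, flipPerm_flipPerm]]
      rw [sgn2_add_one, ← hs]
    · rw [flipPerm_apply_ge hjk]
      have hgk : g k = s * u j := by
        simp only [hg]; rw [dif_neg (by omega)]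
      rw [hgk, prefixRev_fst, if_neg hjk, hs]
  rw [Finset.sum_congr rfl hstep]
  have hsplit : ∑ k ∈ Finset.Icc 1 n, g k
      = (∑ k ∈ Finset.Ioc 0 j.val, g k) + ∑ k ∈ Finset.Ioc j.val n, g k := by
    rw [show Finset.Icc 1 n = Finset.Ioc 0 n from Finset.Icc_add_one_left_eq_Ioc 0 n]
    rw [← Finset.sum_Ioc_consecutive _ (Nat.zero_le j.val) (le_of_lt j.isLt)]
  rw [hsplit]
  have h1 : ∑ k ∈ Finset.Ioc 0 j.val, g k = (j.val : ℝ) * (s * u j) := by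
    rw [Finset.sum_congr rfl (fun k hk => show g k = s * u j from ?_), Finset.sum_const,
      Nat.card_Ioc, Nat.sub_zero, nsmul_eq_mul]
    rw [Finset.mem_Ioc] at hk
    simp only [hg]
    rw [dif_neg (by omega)]
  have h2 : ∑ k ∈ Finset.Ioc j.val n, g k
      = ∑ j' ∈ Finset.univ.filter (fun j' : Fin n => j.val + j'.val + 1 ≤ n),
          (-s * u j') := by
    refine Finset.sum_bij'
      (i := fun k hk => (⟨k - 1 - j.val, by
        rw [Finset.mem_Ioc] at hk; omega⟩ : Fin n))
      (j := fun j' hj' => j.val + j'.val + 1) ?_ ?_ ?_ ?_ ?_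
    · intro k hk
      rw [Finset.mem_Ioc] at hk
      simp only [Finset.mem_filter, Finset.mem_univ, true_and]
      omega
    · intro j' hj'
      simp only [Finset.mem_filter, Finset.mem_univ, true_and] at hj'
      simp only [Finset.mem_Ioc]
      omega
    · intro k hk
      rw [Finset.mem_Ioc] at hk
      simp only [Fin.val_mk]
      omega
    · intro j' hj'
      simp only [Finset.mem_filter, Finset.mem_univ, true_and] at hj'
      apply Fin.ext
      simp only [Fin.val_mk]
      omega
    · intro k hk
      rw [Finset.mem_Ioc] at hk
      simp only [hg]
      rw [dif_pos ⟨hk.1, hk.2⟩]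
  rw [h1, h2]
  have hrow := congrFun heig j
  rw [rowDE] at hrow
  simp only [Pi.smul_apply, smul_eq_mul] at hrow ⊢
  rw [Finset.sum_congr rfl (fun j' _ => (neg_mul s (u j')))]
  rw [Finset.sum_neg_distrib, ← Finset.mul_sum]
  linear_combination s * hrow

end Lift

section Roots
open Matrix Polynomial

lemma eval_charpoly_eq_det {N : Type*} [Fintype N] [DecidableEq N]
    (M : Matrix N N ℝ) (t : ℝ) :
    M.charpoly.eval t = (t • (1 : Matrix N N ℝ) - M).det := by
  rw [Matrix.charpoly, show (Polynomial.eval t : ℝ[X] → ℝ) = ⇑(Polynomial.evalRingHom t) from rfl,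
    RingHom.map_det]
  congr 1
  ext i j
  by_cases h : i = j
  · subst h
    simp [Matrix.charmatrix_apply_eq, Matrix.map_apply, Matrix.sub_apply, Matrix.smul_apply,
      Matrix.one_apply_eq]
  · simp [Matrix.charmatrix_apply_ne _ _ _ h, Matrix.map_apply, Matrix.sub_apply,
      Matrix.smul_apply, Matrix.one_apply_ne h]

lemma root_of_eigen {N : Type*} [Fintype N] [DecidableEq N]
    (M : Matrix N N ℝ) (μ : ℝ) (x : N → ℝ) (hx : x ≠ 0) (h : M *ᵥ x = μ • x) :
    μ ∈ M.charpoly.roots := by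
  rw [Polynomial.mem_roots (Matrix.charpoly_monic M).ne_zero]
  rw [Polynomial.IsRoot, eval_charpoly_eq_det]
  rw [← Matrix.exists_mulVec_eq_zero_iff]
  exact ⟨x, hx, by
    rw [Matrix.sub_mulVec, Matrix.smul_mulVec, Matrix.one_mulVec, h, sub_self]⟩

lemma second_largest_gt {s : Multiset ℝ} {a b c : ℝ} (ha : a ∈ s) (hb : b ∈ s)
    (hab : a ≠ b) (hac : c < a) (hbc : c < b) :
    c < ((s.sort (· ≤ ·)).reverse).getD 1 0 := by
  set l := s.sort (· ≤ ·) with hl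
  have hsort : List.Pairwise (· ≤ ·) l := s.pairwise_sort _
  have hal : a ∈ l := by rw [hl, Multiset.mem_sort]; exact ha
  have hbl : b ∈ l := by rw [hl, Multiset.mem_sort]; exact hb
  obtain ⟨p, hp, hpa⟩ := List.getElem_of_mem hal
  obtain ⟨q, hq, hqb⟩ := List.getElem_of_mem hbl
  have hpq : p ≠ q := by
    intro hh
    subst hh
    exact hab (hpa.symm.trans hqb)
  have hlen : 2 ≤ l.length := by omega
  have h2 : 1 < l.reverse.length := by rw [List.length_reverse]; omega
  rw [List.getD_eq_getElem l.reverse 0 h2, List.getElem_reverse]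
  have hmono := List.pairwise_iff_getElem.mp hsort
  have key : ∀ r (hr : r < l.length), r ≤ l.length - 1 - 1 →
      l[r] ≤ l[l.length - 1 - 1]'(by omega) := by
    intro r hr hrle
    rcases lt_or_eq_of_le hrle with h | h
    · exact hmono r _ hr (by omega) h
    · subst h
      exact le_refl _
  rcases le_total p q with hle | hle
  · have hcp : c < l[p] := by rw [hpa]; exact hac
    exact lt_of_lt_of_le hcp (key p hp (by omega))
  · have hcq : c < l[q] := by rw [hqb]; exact hbc
    exact lt_of_lt_of_le hcq (key q hq (by omega))

end Roots

theorem burnt_pancake_second_eig_gt' (n : ℕ) (hn : 2 ≤ n) :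
    nthLargestEig (pancakeAdjMatrix 2 n) 2 > n - 1 := by
  classical
  have hn0 : 0 < n := by omega
  obtain ⟨μ, hμ1, hμ2, u, hu, heig⟩ := exists_eig_DE_gt hn
  set x : ColouredPerm 2 n → ℝ := fun σ =>
    sgn2 (σ.1 (σ.2.symm ⟨0, hn0⟩)) * u (σ.2.symm ⟨0, hn0⟩) with hx
  have hxeig := lift_eig hn0 μ u heig
  obtain ⟨i₀, hi₀⟩ := Function.ne_iff.mp hu
  have hi₀' : u i₀ ≠ 0 := hi₀
  set σ₀ : ColouredPerm 2 n := (fun _ => (0 : ZMod 2), Equiv.swap i₀ ⟨0, hn0⟩) with hσ₀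
  have hxσ₀ : x σ₀ = u i₀ := by
    rw [hx]
    simp only [hσ₀, Equiv.symm_swap, Equiv.swap_apply_right]
    simp [sgn2]
  have hxne : x ≠ 0 := fun hh => hi₀' (by rw [← hxσ₀, hh]; rfl)
  have hone : (fun _ : ColouredPerm 2 n => (1:ℝ)) ≠ 0 := fun hh => by
    have := congrFun hh σ₀
    norm_num at this
  have hrootμ : μ ∈ (pancakeAdjMatrix 2 n).charpoly.roots :=
    root_of_eigen _ μ x hxne hxeig
  have hrootn : (n : ℝ) ∈ (pancakeAdjMatrix 2 n).charpoly.roots :=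
    root_of_eigen _ (n : ℝ) _ hone (ones_eig hn0)
  have hne : (n : ℝ) ≠ μ := ne_of_gt hμ2
  have hc1 : (n : ℝ) - 1 < (n : ℝ) := by linarith
  exact second_largest_gt hrootn hrootμ hne hc1 hμ1


/-- For every integer `n ≥ 2`, the second largest eigenvalue
of the adjacency matrix of the burnt pancake graph `𝒫_2(n)` satisfies
`λ₂(𝒫_2(n)) > n − 1`. -/
theorem burnt_pancake_second_eig_gt (n : ℕ) (hn : 2 ≤ n) :
    nthLargestEig (pancakeAdjMatrix 2 n) 2 > n - 1 :=
  burnt_pancake_second_eig_gt' n hn
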